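/- Let G, A, B be groups and φ₁ : G → A, φ₂ : G → B surjective homomorphisms, φ(x) = (φ₁(x), φ₂(x)). Then im φ is a normal subgroup of A × B if and only if the quotient group G/(ker φ₁ · ker φ₂) is abelian. -/
import Mathlib

theorem stmt_7 {G A B : Type*} [Group G] [Group A] [Group B]
    (φ₁ : G →* A) (φ₂ : G →* B)
    (h₁ : Function.Surjective φ₁) (h₂ : Function.Surjective φ₂) :
    (φ₁.prod φ₂).range.Normal ↔
      ∀ a b : G ⧸ (φ₁.ker ⊔ φ₂.ker), a * b = b * a := by
  constructor
  · intro hN a b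
    induction a using QuotientGroup.induction_on with | H x =>
    induction b using QuotientGroup.induction_on with | H y =>
    rw [← QuotientGroup.mk_mul, ← QuotientGroup.mk_mul, QuotientGroup.eq]
    obtain ⟨z, hz⟩ := hN.conj_mem _ ⟨x, rfl⟩ (φ₁ y, 1)
    have hz1 : φ₁ z = φ₁ (y * x * y⁻¹) := by
      have := congrArg Prod.fst hz
      simpa [MonoidHom.prod_apply, mul_assoc] using this
    have hz2 : φ₂ z = φ₂ x := by
      have := congrArg Prod.snd hz
      simpa [MonoidHom.prod_apply] using this
    have ha : y⁻¹ * z⁻¹ * y * x ∈ φ₁.ker := by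
      simp only [MonoidHom.mem_ker, map_mul, map_inv, hz1, map_mul, map_inv]
      group
    have hb : x⁻¹ * y⁻¹ * z * x⁻¹ * y * x ∈ φ₂.ker := by
      simp only [MonoidHom.mem_ker, map_mul, map_inv, hz2]
      group
    have key : (x * y)⁻¹ * (y * x) =
        (y⁻¹ * z⁻¹ * y * x) * (x⁻¹ * y⁻¹ * z * x⁻¹ * y * x) := by group
    rw [key]
    exact mul_mem (Subgroup.mem_sup_left ha) (Subgroup.mem_sup_right hb)
  · intro hab
    constructor
    rintro _ ⟨g, rfl⟩ ⟨a, b⟩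
    obtain ⟨x, rfl⟩ := h₁ a
    obtain ⟨y, rfl⟩ := h₂ b
    have hd : (x * g * x⁻¹)⁻¹ * (y * g * y⁻¹) ∈ φ₁.ker ⊔ φ₂.ker := by
      rw [← QuotientGroup.eq]
      have e1 : ((x * g * x⁻¹ : G) : G ⧸ (φ₁.ker ⊔ φ₂.ker)) = ((g : G) : G ⧸ (φ₁.ker ⊔ φ₂.ker)) := by
        rw [QuotientGroup.eq]
        have := hab ((x : G ⧸ (φ₁.ker ⊔ φ₂.ker))) ((g : G ⧸ (φ₁.ker ⊔ φ₂.ker)))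
        rw [← QuotientGroup.mk_mul, ← QuotientGroup.mk_mul, QuotientGroup.eq] at this
        have key : (x * g * x⁻¹)⁻¹ * g = (x * ((x * g)⁻¹ * (g * x)) * x⁻¹) := by group
        rw [key]
        exact Subgroup.Normal.conj_mem inferInstance _ this x
      have e2 : ((y * g * y⁻¹ : G) : G ⧸ (φ₁.ker ⊔ φ₂.ker)) = ((g : G) : G ⧸ (φ₁.ker ⊔ φ₂.ker)) := by
        rw [QuotientGroup.eq]
        have := hab ((y : G ⧸ (φ₁.ker ⊔ φ₂.ker))) ((g : G ⧸ (φ₁.ker ⊔ φ₂.ker)))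
        rw [← QuotientGroup.mk_mul, ← QuotientGroup.mk_mul, QuotientGroup.eq] at this
        have key : (y * g * y⁻¹)⁻¹ * g = (y * ((y * g)⁻¹ * (g * y)) * y⁻¹) := by group
        rw [key]
        exact Subgroup.Normal.conj_mem inferInstance _ this y
      rw [e1, e2]
    rw [← SetLike.mem_coe, Subgroup.mul_normal] at hd
    obtain ⟨k₁, hk₁, k₂, hk₂, hk⟩ := hd
    refine ⟨x * g * x⁻¹ * k₁, ?_⟩
    have hk₁' : φ₁ k₁ = 1 := hk₁
    have hk₂' : φ₂ k₂ = 1 := hk₂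
    ext
    · simp [MonoidHom.prod_apply, hk₁', mul_assoc]
    · simp only [MonoidHom.prod_apply, Prod.snd_mul, Prod.snd_inv, map_mul]
      have : φ₂ k₁ = φ₂ ((x * g * x⁻¹)⁻¹ * (y * g * y⁻¹)) := by
        rw [← hk, map_mul, hk₂', mul_one]
      rw [this]
      simp [map_mul, map_inv, mul_assoc]
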